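/- Let n ≥ 2 and let W := {A ∈ Sym_n(ℝ) : tr(A) = 0} be the space of real symmetric n×n matrices with trace zero. If V ⊆ W is a linear subspace which is invariant under conjugation by special orthogonal matrices, i.e. a v aᵀ ∈ V for all a ∈ SO(n) and v ∈ V, then V = 0 or V = W. (The representation of SO(n) on W by conjugation is irreducible.) -/

import Mathlib

open Matrix
variable {n : ℕ}
variable {n : ℕ}

def rotAux (i j : Fin n) (p q r t : ℝ) : Matrix (Fin n) (Fin n) ℝ :=
  Matrix.of fun a b =>
    if a = i then (if b = i then p else if b = j then q else 0)
    else if a = j then (if b = i then r else if b = j then t else 0)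
    else if a = b then 1 else 0

def blkAux (i j : Fin n) (α β : ℝ) : Matrix (Fin n) (Fin n) ℝ :=
  Matrix.of fun a b =>
    if a = i ∧ b = i then α
    else if a = j ∧ b = j then -α
    else if (a = i ∧ b = j) ∨ (a = j ∧ b = i) then β
    else 0

lemma rotAux_sum (i j : Fin n) (hij : i ≠ j) (p q r t : ℝ) (a : Fin n) (y : Fin n → ℝ) :
    ∑ k, rotAux i j p q r t a k * y k =
      if a = i then p * y i + q * y j else if a = j then r * y i + t * y j else y a := by
  by_cases hai : a = i
  · have h : ∀ k, rotAux i j p q r t a k * y k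
        = (if k = i then p * y i else 0) + (if k = j then q * y j else 0) := by
      intro k
      by_cases hki : k = i <;> by_cases hkj : k = j
      · exact absurd (hki.symm.trans hkj) hij
      · simp [rotAux, hai, hki, hkj, hij, Ne.symm hij]
      · simp [rotAux, hai, hki, hkj, hij, Ne.symm hij]
      · simp [rotAux, hai, hki, hkj, hij, Ne.symm hij]
    rw [Finset.sum_congr rfl fun k _ => h k, Finset.sum_add_distrib,
      Finset.sum_ite_eq' Finset.univ i fun _ => p * y i,
      Finset.sum_ite_eq' Finset.univ j fun _ => q * y j]
    simp [hai]
  · by_cases haj : a = j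
    · have h : ∀ k, rotAux i j p q r t a k * y k
          = (if k = i then r * y i else 0) + (if k = j then t * y j else 0) := by
        intro k
        by_cases hki : k = i <;> by_cases hkj : k = j
        · exact absurd (hki.symm.trans hkj) hij
        · simp [rotAux, hai, haj, hki, hkj, hij, Ne.symm hij]
        · simp [rotAux, hai, haj, hki, hkj, hij, Ne.symm hij]
        · simp [rotAux, hai, haj, hki, hkj, hij, Ne.symm hij]
      rw [Finset.sum_congr rfl fun k _ => h k, Finset.sum_add_distrib,
        Finset.sum_ite_eq' Finset.univ i fun _ => r * y i,
        Finset.sum_ite_eq' Finset.univ j fun _ => t * y j]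
      simp [hai, haj, Ne.symm hij]
    · have h : ∀ k, rotAux i j p q r t a k * y k = (if a = k then y k else 0) := by
        intro k
        by_cases hki : k = i <;> by_cases hkj : k = j <;> by_cases hka : a = k <;>
          simp_all [rotAux]
      rw [Finset.sum_congr rfl fun k _ => h k, Finset.sum_ite_eq Finset.univ a fun k => y k]
      simp [hai, haj, Ne.symm hij]

lemma rotAux_conj_apply (i j : Fin n) (hij : i ≠ j) (p q r t : ℝ)
    (x : Matrix (Fin n) (Fin n) ℝ) (a b : Fin n) :
    (rotAux i j p q r t * x * (rotAux i j p q r t)ᵀ) a b =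
      (if b = i then p * (if a = i then p * x i i + q * x j i
                  else if a = j then r * x i i + t * x j i else x a i)
              + q * (if a = i then p * x i j + q * x j j
                  else if a = j then r * x i j + t * x j j else x a j)
       else if b = j then r * (if a = i then p * x i i + q * x j i
                  else if a = j then r * x i i + t * x j i else x a i)
              + t * (if a = i then p * x i j + q * x j j
                  else if a = j then r * x i j + t * x j j else x a j)
       else (if a = i then p * x i b + q * x j b
                  else if a = j then r * x i b + t * x j b else x a b)) := by
  have hin : ∀ l, (rotAux i j p q r t * x) a l =
      if a = i then p * x i l + q * x j l else if a = j then r * x i l + t * x j l else x a l :=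
    fun l => by rw [mul_apply, rotAux_sum i j hij]
  rw [mul_apply]
  have h2 : ∀ l, (rotAux i j p q r t * x) a l * (rotAux i j p q r t)ᵀ l b
      = rotAux i j p q r t b l * ((rotAux i j p q r t * x) a l) := fun l => by
    rw [transpose_apply, mul_comm]
  rw [Finset.sum_congr rfl fun l _ => h2 l,
    rotAux_sum i j hij p q r t b (fun l => (rotAux i j p q r t * x) a l)]
  simp only [hin]

lemma rotAux_transpose (i j : Fin n) (hij : i ≠ j) (p q r t : ℝ) :
    (rotAux i j p q r t)ᵀ = rotAux i j p r q t := by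
  ext a b
  simp only [transpose_apply, rotAux, of_apply]
  by_cases hai : a = i <;> by_cases haj : a = j <;> by_cases hbi : b = i <;>
    by_cases hbj : b = j <;> simp_all [Ne.symm hij, eq_comm]

lemma rotAux_mul (i j : Fin n) (hij : i ≠ j) (p q r t p' q' r' t' : ℝ) :
    rotAux i j p q r t * rotAux i j p' q' r' t' =
      rotAux i j (p*p'+q*r') (p*q'+q*t') (r*p'+t*r') (r*q'+t*t') := by
  ext a b
  rw [mul_apply, rotAux_sum i j hij]
  by_cases hai : a = i <;> by_cases haj : a = j <;> by_cases hbi : b = i <;>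
    by_cases hbj : b = j <;> simp_all [rotAux, Ne.symm hij, eq_comm] <;> ring

lemma rotAux_one (i j : Fin n) (hij : i ≠ j) : rotAux i j (1:ℝ) 0 0 1 = 1 := by
  ext a b
  by_cases hai : a = i <;> by_cases haj : a = j <;> by_cases hab : a = b <;>
    simp_all [rotAux, one_apply, Ne.symm hij, eq_comm]

lemma rotAux_orth (i j : Fin n) (hij : i ≠ j) (p q r t : ℝ)
    (h1 : p^2 + r^2 = 1) (h2 : p*q + r*t = 0) (h3 : q^2 + t^2 = 1) :
    (rotAux i j p q r t)ᵀ * rotAux i j p q r t = 1 := by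
  rw [rotAux_transpose i j hij, rotAux_mul i j hij]
  have e1 : p*p + r*r = 1 := by nlinarith
  have e2 : p*q + r*t = 0 := h2
  have e3 : q*q + t*t = 1 := by nlinarith
  have e4 : q*p + t*r = 0 := by nlinarith
  rw [e1, e2, e3, e4, rotAux_one i j hij]

def detU (i j : Fin n) : Matrix (Fin n) (Fin 2) ℝ := Matrix.of fun a k =>
    if k = 0 then (if a = i then (1:ℝ) else 0) else (if a = j then 1 else 0)

def detW (i j : Fin n) (p q r t : ℝ) : Matrix (Fin 2) (Fin n) ℝ := Matrix.of fun k b =>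
    if k = 0 then (if b = i then p - 1 else if b = j then q else 0)
    else (if b = i then r else if b = j then t - 1 else 0)

lemma rotAux_det (i j : Fin n) (hij : i ≠ j) (p q r t : ℝ) :
    (rotAux i j p q r t).det = p * t - q * r := by
  have hrot : rotAux i j p q r t = 1 + detU i j * detW i j p q r t := by
    ext a b
    rw [Matrix.add_apply, mul_apply, Fin.sum_univ_two]
    by_cases hai : a = i <;> by_cases haj : a = j <;> by_cases hbi : b = i <;>
      by_cases hbj : b = j <;> by_cases hab : a = b <;>
      simp_all [rotAux, detU, detW, one_apply, Ne.symm hij, eq_comm] <;> ring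
  have hWU : detW i j p q r t * detU i j = Matrix.of fun k l : Fin 2 =>
      (if k = 0 then (if l = 0 then p - 1 else q) else (if l = 0 then r else t - 1)) := by
    ext k l
    rw [mul_apply]
    have h : ∀ m, detW i j p q r t k m * detU i j m l =
        (if m = i then detW i j p q r t k i * detU i j i l else 0)
        + (if m = j then detW i j p q r t k j * detU i j j l else 0) := by
      intro m
      by_cases hmi : m = i <;> by_cases hmj : m = j <;>
        simp_all [detU, detW, Ne.symm hij, eq_comm]
    rw [Finset.sum_congr rfl fun m _ => h m, Finset.sum_add_distrib,
      Finset.sum_ite_eq' Finset.univ i fun _ => detW i j p q r t k i * detU i j i l,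
      Finset.sum_ite_eq' Finset.univ j fun _ => detW i j p q r t k j * detU i j j l]
    fin_cases k <;> fin_cases l <;> simp [detU, detW, hij, Ne.symm hij] <;> ring
  rw [hrot, Matrix.det_one_add_mul_comm, hWU]
  rw [show (1 + Matrix.of fun k l : Fin 2 =>
      (if k = 0 then (if l = 0 then p - 1 else q) else (if l = 0 then r else t - 1)))
      = !![p, q; r, t] from by ext a b; fin_cases a <;> fin_cases b <;>
        simp [Matrix.one_apply] ]
  rw [Matrix.det_fin_two_of]

lemma conj_F_apply (i j : Fin n) (hij : i ≠ j) (x : Matrix (Fin n) (Fin n) ℝ) (a b : Fin n) :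
    (rotAux i j 0 (-1) 1 0 * x * (rotAux i j 0 (-1) 1 0)ᵀ) a b =
      (if a = i then -1 else 1) * (if b = i then -1 else 1) *
        x (Equiv.swap i j a) (Equiv.swap i j b) := by
  rw [rotAux_conj_apply i j hij]
  by_cases hai : a = i <;> by_cases haj : a = j <;> by_cases hbi : b = i <;> by_cases hbj : b = j <;>
    simp_all [Equiv.swap_apply_left, Equiv.swap_apply_right, Equiv.swap_apply_of_ne_of_ne,
      Ne.symm hij] <;> ring

lemma conj_G_apply (i j : Fin n) (hij : i ≠ j) (x : Matrix (Fin n) (Fin n) ℝ) (a b : Fin n) :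
    (rotAux i j (-1) 0 0 (-1) * x * (rotAux i j (-1) 0 0 (-1))ᵀ) a b =
      (if a = i ∨ a = j then (-1:ℝ) else 1) * (if b = i ∨ b = j then (-1:ℝ) else 1) * x a b := by
  rw [rotAux_conj_apply i j hij]
  by_cases hai : a = i <;> by_cases haj : a = j <;> by_cases hbi : b = i <;> by_cases hbj : b = j <;>
    simp_all [Ne.symm hij] <;> ring

lemma blkAux_smul (i j : Fin n) (c α β : ℝ) :
    c • blkAux i j α β = blkAux i j (c*α) (c*β) := by
  ext a b
  simp only [blkAux, Matrix.smul_apply, of_apply, smul_eq_mul]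
  split_ifs <;> ring

lemma blkAux_comb (i j : Fin n) (c d α β α' β' : ℝ) :
    c • blkAux i j α β + d • blkAux i j α' β' = blkAux i j (c*α + d*α') (c*β + d*β') := by
  ext a b
  simp only [blkAux, Matrix.smul_apply, Matrix.add_apply, of_apply, smul_eq_mul]
  split_ifs <;> ring

section Memb

variable (V : Submodule ℝ (Matrix (Fin n) (Fin n) ℝ))

lemma mem_blk (hVinv : ∀ a : Matrix (Fin n) (Fin n) ℝ, aᵀ * a = 1 → a.det = 1 →
      ∀ v ∈ V, a * v * aᵀ ∈ V) (i j : Fin n) (hij : i ≠ j) (x : Matrix (Fin n) (Fin n) ℝ)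
    (hx : x ∈ V) (hxs : ∀ u v, x u v = x v u) :
    blkAux i j (x i i - x j j) (2 * x i j) ∈ V := by
  set F := rotAux i j 0 (-1) 1 0 with hF
  set G := rotAux i j (-1) 0 0 (-1) with hG
  have hFm : F * x * Fᵀ ∈ V :=
    hVinv F (rotAux_orth i j hij _ _ _ _ (by norm_num) (by norm_num) (by norm_num))
      (by rw [hF, rotAux_det i j hij]; norm_num) x hx
  have hy : x - F * x * Fᵀ ∈ V := sub_mem hx hFm
  have hGm : G * (x - F * x * Fᵀ) * Gᵀ ∈ V :=
    hVinv G (rotAux_orth i j hij _ _ _ _ (by norm_num) (by norm_num) (by norm_num))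
      (by rw [hG, rotAux_det i j hij]; norm_num) _ hy
  have key : blkAux i j (x i i - x j j) (2 * x i j) =
      (2:ℝ)⁻¹ • ((x - F * x * Fᵀ) + G * (x - F * x * Fᵀ) * Gᵀ) := by
    ext a b
    rw [Matrix.smul_apply, Matrix.add_apply, conj_G_apply i j hij, Matrix.sub_apply,
      conj_F_apply i j hij]
    simp only [blkAux, of_apply, smul_eq_mul]
    by_cases hai : a = i <;> by_cases haj : a = j <;> by_cases hbi : b = i <;>
      by_cases hbj : b = j <;>
      simp_all [Equiv.swap_apply_left, Equiv.swap_apply_right, Equiv.swap_apply_of_ne_of_ne,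
        Ne.symm hij] <;> first
      | ring
      | (rw [hxs i j] ; ring)
      | (rw [hxs b a] ; ring)
      | (rw [hxs j b] ; ring)
      | (rw [hxs i b] ; ring)
      | (rw [hxs a j] ; ring)
      | (rw [hxs a i] ; ring)
  rw [key]
  exact Submodule.smul_mem V _ (add_mem hy hGm)

lemma mem_blk' (hVinv : ∀ a : Matrix (Fin n) (Fin n) ℝ, aᵀ * a = 1 → a.det = 1 →
      ∀ v ∈ V, a * v * aᵀ ∈ V) (i j : Fin n) (hij : i ≠ j) (x : Matrix (Fin n) (Fin n) ℝ)
    (hx : x ∈ V) (hxs : ∀ u v, x u v = x v u) :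
    blkAux i j (-(2 * x i j)) (x i i - x j j) ∈ V := by
  set c : ℝ := Real.sqrt 2 / 2 with hc
  have hc2 : c^2 = 1/2 := by
    rw [hc, div_pow, Real.sq_sqrt (by norm_num : (0:ℝ) ≤ 2)]
    norm_num
  set R := rotAux i j c (-c) c c with hR
  have hRo : Rᵀ * R = 1 :=
    rotAux_orth i j hij _ _ _ _ (by nlinarith) (by ring) (by nlinarith)
  have hRdet : R.det = 1 := by rw [hR, rotAux_det i j hij]; nlinarith
  have hx' : R * x * Rᵀ ∈ V := hVinv R hRo hRdet x hx
  have hx's : ∀ u v, (R * x * Rᵀ) u v = (R * x * Rᵀ) v u := by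
    intro u v
    have hxt : xᵀ = x := Matrix.ext fun u v => hxs v u
    have h : (R * x * Rᵀ)ᵀ = R * x * Rᵀ := by
      rw [transpose_mul, transpose_mul, transpose_transpose, hxt, Matrix.mul_assoc]
    conv_lhs => rw [← h]
    rfl
  have hmem := mem_blk V hVinv i j hij (R * x * Rᵀ) hx' hx's
  have eii := rotAux_conj_apply i j hij c (-c) c c x i i
  have ejj := rotAux_conj_apply i j hij c (-c) c c x j j
  have eij := rotAux_conj_apply i j hij c (-c) c c x i j
  simp only [if_pos rfl, if_neg hij, if_neg (Ne.symm hij), if_true] at eii ejj eij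
  have hji : x j i = x i j := hxs j i
  have e1 : (R * x * Rᵀ) i i - (R * x * Rᵀ) j j = -(2 * x i j) := by
    rw [← hR] at eii ejj
    rw [eii, ejj, hji]
    linear_combination (-4 * x i j) * hc2
  have e2 : 2 * (R * x * Rᵀ) i j = x i i - x j j := by
    rw [← hR] at eij
    rw [eij, hji]
    linear_combination (2 * (x i i - x j j)) * hc2
  rw [e1, e2] at hmem
  exact hmem

lemma mem_DS (hVinv : ∀ a : Matrix (Fin n) (Fin n) ℝ, aᵀ * a = 1 → a.det = 1 →
      ∀ v ∈ V, a * v * aᵀ ∈ V) (i j : Fin n) (hij : i ≠ j) (x : Matrix (Fin n) (Fin n) ℝ)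
    (hx : x ∈ V) (hxs : ∀ u v, x u v = x v u)
    (hne : x i i - x j j ≠ 0 ∨ x i j ≠ 0) :
    blkAux i j 1 0 ∈ V ∧ blkAux i j 0 1 ∈ V := by
  set α := x i i - x j j with hα
  set β := 2 * x i j with hβ
  have m1 : blkAux i j α β ∈ V := mem_blk V hVinv i j hij x hx hxs
  have m2 : blkAux i j (-β) α ∈ V := mem_blk' V hVinv i j hij x hx hxs
  have hs : α^2 + β^2 ≠ 0 := by
    rcases hne with h | h
    · positivity
    · have : β ≠ 0 := by rw [hβ]; intro hh; exact h (by linarith)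
      positivity
  have hD : blkAux i j (α^2+β^2) 0 ∈ V := by
    have := add_mem (Submodule.smul_mem V α m1) (Submodule.smul_mem V (-β) m2)
    rw [blkAux_comb] at this
    rw [show α^2+β^2 = α*α + -β*-β by ring, show (0:ℝ) = α*β + -β*α by ring]
    exact this
  have hS : blkAux i j 0 (α^2+β^2) ∈ V := by
    have := add_mem (Submodule.smul_mem V β m1) (Submodule.smul_mem V α m2)
    rw [blkAux_comb] at this
    rw [show (0:ℝ) = β*α + α*-β by ring, show α^2+β^2 = β*β + α*α by ring]
    exact this
  constructor
  · have := Submodule.smul_mem V (α^2+β^2)⁻¹ hD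
    rw [blkAux_smul, inv_mul_cancel₀ hs, mul_zero] at this
    exact this
  · have := Submodule.smul_mem V (α^2+β^2)⁻¹ hS
    rw [blkAux_smul, inv_mul_cancel₀ hs, mul_zero] at this
    exact this

end Memb

lemma conj_F_blk (a b u v : Fin n) (hab : a ≠ b) (α β : ℝ) :
    rotAux a b 0 (-1) 1 0 * blkAux u v α β * (rotAux a b 0 (-1) 1 0)ᵀ =
      blkAux (Equiv.swap a b u) (Equiv.swap a b v) α
        (((if u = b then (-1:ℝ) else 1) * (if v = b then (-1:ℝ) else 1)) * β) := by
  have hsw : ∀ g : Fin n, (Equiv.swap a b g = a) ↔ (g = b) := by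
    intro g
    constructor
    · intro h
      have := congrArg (Equiv.swap a b) h
      rwa [Equiv.swap_apply_self, Equiv.swap_apply_left] at this
    · intro h; rw [h, Equiv.swap_apply_right]
  ext e f
  obtain ⟨e, rfl⟩ : ∃ e', e = Equiv.swap a b e' := ⟨_, (Equiv.swap_apply_self a b e).symm⟩
  obtain ⟨f, rfl⟩ : ∃ f', f = Equiv.swap a b f' := ⟨_, (Equiv.swap_apply_self a b f).symm⟩
  rw [conj_F_apply a b hab]
  simp only [blkAux, of_apply, Equiv.swap_apply_self, Equiv.apply_eq_iff_eq, hsw]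
  split_ifs <;> (try rcases ‹_ ∨ _› with ⟨rfl, rfl⟩ | ⟨rfl, rfl⟩) <;> first | ring1 | simp_all

lemma mem_swap (V : Submodule ℝ (Matrix (Fin n) (Fin n) ℝ))
    (hVinv : ∀ a : Matrix (Fin n) (Fin n) ℝ, aᵀ * a = 1 → a.det = 1 →
      ∀ v ∈ V, a * v * aᵀ ∈ V) (a b u v : Fin n)
    (h1 : blkAux u v 1 0 ∈ V) (h0 : blkAux u v 0 1 ∈ V) :
    blkAux (Equiv.swap a b u) (Equiv.swap a b v) 1 0 ∈ V ∧
      blkAux (Equiv.swap a b u) (Equiv.swap a b v) 0 1 ∈ V := by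
  by_cases hab : a = b
  · subst hab; simpa [Equiv.swap_self] using ⟨h1, h0⟩
  · set F := rotAux a b 0 (-1) 1 0 with hF
    have hFo : Fᵀ * F = 1 :=
      rotAux_orth a b hab _ _ _ _ (by norm_num) (by norm_num) (by norm_num)
    have hFdet : F.det = 1 := by rw [hF, rotAux_det a b hab]; norm_num
    constructor
    · have := hVinv F hFo hFdet _ h1
      rw [hF, conj_F_blk a b u v hab, mul_zero] at this
      exact this
    · have hmem := hVinv F hFo hFdet _ h0
      rw [hF, conj_F_blk a b u v hab, mul_one] at hmem
      have hs : ((if u = b then (-1:ℝ) else 1) * (if v = b then (-1:ℝ) else 1)) = 1 ∨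
          ((if u = b then (-1:ℝ) else 1) * (if v = b then (-1:ℝ) else 1)) = -1 := by
        split_ifs <;> norm_num
      rcases hs with hs | hs
      · rwa [hs] at hmem
      · rw [hs] at hmem
        have := Submodule.smul_mem V (-1 : ℝ) hmem
        rw [blkAux_smul] at this
        norm_num at this
        exact this

lemma all_pairs (V : Submodule ℝ (Matrix (Fin n) (Fin n) ℝ))
    (hVinv : ∀ a : Matrix (Fin n) (Fin n) ℝ, aᵀ * a = 1 → a.det = 1 →
      ∀ v ∈ V, a * v * aᵀ ∈ V) (i j : Fin n) (hij : i ≠ j)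
    (h1 : blkAux i j 1 0 ∈ V) (h0 : blkAux i j 0 1 ∈ V) (k l : Fin n) (hkl : k ≠ l) :
    blkAux k l (1:ℝ) 0 ∈ V ∧ blkAux k l (0:ℝ) 1 ∈ V := by
  obtain ⟨h1', h0'⟩ := mem_swap V hVinv i k i j h1 h0
  rw [Equiv.swap_apply_left] at h1' h0'
  set j1 := Equiv.swap i k j with hj1
  have hkj1 : k ≠ j1 := by
    intro h
    apply hij
    have := congrArg (Equiv.swap i k) h
    rw [Equiv.swap_apply_right, hj1, Equiv.swap_apply_self] at this
    exact this
  obtain ⟨h1'', h0''⟩ := mem_swap V hVinv j1 l k j1 h1' h0'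
  rw [Equiv.swap_apply_of_ne_of_ne hkj1 hkl, Equiv.swap_apply_left] at h1'' h0''
  exact ⟨h1'', h0''⟩

/-- the conjugation representation of `SO(n)` on the space `W` of real
symmetric trace-zero `n × n` matrices is irreducible: any `SO(n)`-invariant subspace
`V ⊆ W` is `0` or all of `W`. -/
theorem traceless_symmetric_irreducible (n : ℕ) (hn : 2 ≤ n)
    (V : Submodule ℝ (Matrix (Fin n) (Fin n) ℝ))
    (hVW : ∀ v ∈ V, v.IsSymm ∧ Matrix.trace v = 0)
    (hVinv : ∀ a : Matrix (Fin n) (Fin n) ℝ, aᵀ * a = 1 → a.det = 1 →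
      ∀ v ∈ V, a * v * aᵀ ∈ V) :
    V = ⊥ ∨ (V : Set (Matrix (Fin n) (Fin n) ℝ)) =
      {A : Matrix (Fin n) (Fin n) ℝ | A.IsSymm ∧ Matrix.trace A = 0} := by
  by_cases hV : V = ⊥
  · exact Or.inl hV
  right
  obtain ⟨x, hxV, hx0⟩ := (Submodule.ne_bot_iff V).mp hV
  obtain ⟨hxs', hxtr⟩ := hVW x hxV
  have hxs : ∀ u v, x u v = x v u := fun u v => (hxs'.apply u v).symm
  have hpair : ∃ i j : Fin n, i ≠ j ∧ (x i i - x j j ≠ 0 ∨ x i j ≠ 0) := by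
    by_contra h
    push_neg at h
    apply hx0
    have hdiag : ∀ a b : Fin n, x a a = x b b := by
      intro a b
      by_cases hab : a = b
      · rw [hab]
      · have := (h a b hab).1; linarith
    have htr : ∑ k, x k k = 0 := by
      simpa [Matrix.trace, Matrix.diag] using hxtr
    have hn0 : (n : ℝ) ≠ 0 := by
      have : 0 < n := by omega
      exact_mod_cast this.ne'
    have hz : ∀ a, x a a = 0 := by
      intro a
      have hsum : ∑ k : Fin n, x k k = (n : ℝ) * x a a := by
        rw [Finset.sum_congr rfl fun k _ => hdiag k a]
        rw [Finset.sum_const, Finset.card_univ, Fintype.card_fin, nsmul_eq_mul]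
      rw [htr] at hsum
      rcases mul_eq_zero.mp hsum.symm with h' | h'
      · exact absurd h' hn0
      · exact h' 
    ext a b
    by_cases hab : a = b
    · rw [hab]; simp [hz b]
    · have := (h a b hab).2; simp [this]
  obtain ⟨i, j, hij, hne⟩ := hpair
  obtain ⟨hD1, hS1⟩ := mem_DS V hVinv i j hij x hxV hxs hne
  have hall := all_pairs V hVinv i j hij hD1 hS1
  ext A
  simp only [SetLike.mem_coe, Set.mem_setOf_eq]
  constructor
  · exact fun hA => hVW A hA
  rintro ⟨hAs, hAtr⟩
  have hAsym : ∀ u v, A u v = A v u := fun u v => (hAs.apply u v).symm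
  have hAtr' : ∑ k, A k k = 0 := by simpa [Matrix.trace, Matrix.diag] using hAtr
  have hzlt : 0 < n := by omega
  set z : Fin n := ⟨0, hzlt⟩ with hzdef
  set S1 : Matrix (Fin n) (Fin n) ℝ :=
    ∑ k : Fin n, (if k = z then (0:ℝ) else -A k k) • blkAux z k 1 0 with hS1def
  set S2 : Matrix (Fin n) (Fin n) ℝ :=
    ∑ p ∈ Finset.univ.offDiag, (A p.1 p.2 / 2) • blkAux p.1 p.2 (0:ℝ) 1 with hS2def
  have hmem : S1 + S2 ∈ V := by
    apply add_mem
    · apply Submodule.sum_mem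
      intro k _
      by_cases hkz : k = z
      · rw [hkz, if_pos rfl, zero_smul]
        exact Submodule.zero_mem V
      · rw [if_neg hkz]
        exact Submodule.smul_mem V _ (hall z k (Ne.symm hkz)).1
    · apply Submodule.sum_mem
      intro p hp
      exact Submodule.smul_mem V _ (hall p.1 p.2 (Finset.mem_offDiag.mp hp).2.2).2
  have hEq : A = S1 + S2 := by
    ext a b
    rw [Matrix.add_apply, hS1def, hS2def, Matrix.sum_apply, Matrix.sum_apply]
    by_cases hab : a = b
    · subst hab
      have h2 : ∑ p ∈ Finset.univ.offDiag,
          ((A p.1 p.2 / 2) • blkAux p.1 p.2 (0:ℝ) 1) a a = 0 := by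
        apply Finset.sum_eq_zero
        intro p hp
        have hpne : p.1 ≠ p.2 := (Finset.mem_offDiag.mp hp).2.2
        rw [Matrix.smul_apply, smul_eq_mul]
        simp only [blkAux, of_apply]
        split_ifs with h1 h2 h3
        · ring
        · ring
        · rcases h3 with ⟨hh1, hh2⟩ | ⟨hh1, hh2⟩
          · exact absurd (hh1.symm.trans hh2) hpne
          · exact absurd (hh2.symm.trans hh1) hpne
        · ring
      rw [h2, add_zero]
      by_cases haz : a = z
      · have h1 : ∀ k : Fin n, ((if k = z then (0:ℝ) else -A k k) • blkAux z k 1 0) a a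
            = -A k k + (if k = z then A k k else 0) := by
          intro k
          rw [Matrix.smul_apply, smul_eq_mul]
          simp only [blkAux, of_apply]
          split_ifs <;> first | ring1 | (subst_vars; ring1) | simp_all
        rw [Finset.sum_congr rfl fun k _ => h1 k, Finset.sum_add_distrib,
          Finset.sum_ite_eq' Finset.univ z fun k => A k k]
        simp only [Finset.mem_univ, if_true]
        have hneg : ∑ k : Fin n, -A k k = 0 := by
          rw [Finset.sum_neg_distrib, hAtr', neg_zero]
        rw [hneg, zero_add, haz]
      · have h1 : ∀ k : Fin n, ((if k = z then (0:ℝ) else -A k k) • blkAux z k 1 0) a a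
            = (if k = a then A a a else 0) := by
          intro k
          rw [Matrix.smul_apply, smul_eq_mul]
          simp only [blkAux, of_apply]
          split_ifs <;> first | ring1 | (subst_vars; ring1) | simp_all
        rw [Finset.sum_congr rfl fun k _ => h1 k,
          Finset.sum_ite_eq' Finset.univ a fun _ => A a a]
        simp
    · -- a ≠ b
      have h1 : ∀ k : Fin n, ((if k = z then (0:ℝ) else -A k k) • blkAux z k 1 0) a b = 0 := by
        intro k
        rw [Matrix.smul_apply, smul_eq_mul]
        simp only [blkAux, of_apply]
        split_ifs <;> first | ring1 | (subst_vars; ring1) | simp_all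
      rw [Finset.sum_congr rfl fun k _ => h1 k, Finset.sum_const_zero, zero_add]
      have hsub : ({(a,b),(b,a)} : Finset (Fin n × Fin n)) ⊆ Finset.univ.offDiag := by
        intro p hp
        rw [Finset.mem_insert, Finset.mem_singleton] at hp
        rcases hp with rfl | rfl
        · exact Finset.mem_offDiag.mpr ⟨Finset.mem_univ _, Finset.mem_univ _, hab⟩
        · exact Finset.mem_offDiag.mpr ⟨Finset.mem_univ _, Finset.mem_univ _, Ne.symm hab⟩
      have hzero : ∀ p ∈ Finset.univ.offDiag, p ∉ ({(a,b),(b,a)} : Finset (Fin n × Fin n)) →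
          ((A p.1 p.2 / 2) • blkAux p.1 p.2 (0:ℝ) 1) a b = 0 := by
        intro p hp hpn
        rw [Finset.mem_insert, Finset.mem_singleton] at hpn
        push_neg at hpn
        rw [Matrix.smul_apply, smul_eq_mul]
        simp only [blkAux, of_apply]
        split_ifs with hh1 hh2 hh3
        · ring
        · ring
        · rcases hh3 with ⟨hh1, hh2⟩ | ⟨hh1, hh2⟩
          · exact absurd (Prod.ext_iff.mpr ⟨hh1.symm, hh2.symm⟩) hpn.1
          · exact absurd (Prod.ext_iff.mpr ⟨hh2.symm, hh1.symm⟩) hpn.2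
        · ring
      rw [← Finset.sum_subset hsub hzero]
      have hpairne : ((a,b) : Fin n × Fin n) ≠ (b,a) := by
        intro h
        rw [Prod.ext_iff] at h
        exact hab h.1
      rw [Finset.sum_pair hpairne]
      rw [Matrix.smul_apply, smul_eq_mul, Matrix.smul_apply, smul_eq_mul]
      simp only [blkAux, of_apply]
      simp only [hab, Ne.symm hab, and_true, true_and, and_false, false_and, if_false,
        eq_self_iff_true, if_true, or_false, false_or, or_true, true_or, neg_zero, ite_self]
      rw [hAsym b a]
      ring
  rw [hEq]
  exact hmem
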